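/- arXiv:1212.5261 — 3 statements merged into one kernel-verified Lean document; each statement's English description precedes it below -/
import Mathlib

section
/- Let G₁ be a finite simple graph with a distinguished vertex u and G₂ a finite simple graph with a distinguished vertex v, and let G = G₁|u : G₂|v be the graph on the disjoint union V(G₁) ⊔ V(G₂) whose edge set is the union of the edge sets of G₁ and G₂ together with the additional edge uv. Then, as polynomials in x, Q_G(x) = Q_{G₁}(x)·Q_{G₂}(x) − Q_{G₁}(x)·Q_{G₂|v}(x) − Q_{G₂}(x)·Q_{G₁|u}(x). -/
open Polynomial

/-- The signless Laplacian matrix `Q(G) = D(G) + A(G)` of a simple graph, over `ℝ`. -/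
noncomputable def signlessLaplacian {V : Type*} [Fintype V] [DecidableEq V]
    (G : SimpleGraph V) : Matrix V V ℝ :=
  letI := Classical.decRel G.Adj
  G.degMatrix ℝ + G.adjMatrix ℝ

/-- The signless Laplacian characteristic polynomial `Q_G(x) = det (x I - Q(G))`. -/
noncomputable def Qpoly {V : Type*} [Fintype V] [DecidableEq V] (G : SimpleGraph V) :
    Polynomial ℝ :=
  (signlessLaplacian G).charpoly

/-- The signless Laplacian coefficients: `φ_i(G)` is `(-1)^i` times the coefficient of
`x^(n-i)` in the signless Laplacian characteristic polynomial. -/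
noncomputable def phi {V : Type*} [Fintype V] [DecidableEq V] (G : SimpleGraph V) (i : ℕ) : ℝ :=
  (-1 : ℝ) ^ i * (Qpoly G).coeff (Fintype.card V - i)
/-- `Q_{G|w}(x)`: the determinant of the principal submatrix of `x I - Q(G)` obtained by
deleting the row and the column indexed by the vertex `w`. -/
noncomputable def QpolyDel {V : Type*} [Fintype V] [DecidableEq V] (G : SimpleGraph V)
    (w : V) : Polynomial ℝ :=
  letI : DecidablePred (fun x : V => x ≠ w) := fun _ => Classical.dec _
  ((Matrix.charmatrix (signlessLaplacian G)).submatrix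
      (fun i : {x : V // x ≠ w} => (i : V)) (fun j : {x : V // x ≠ w} => (j : V))).det
/-- The graph `G₁|u : G₂|v` on `V₁ ⊕ V₂`: the disjoint union of `G₁` and `G₂` together with
the extra edge `uv`. -/
def joinByEdge {V₁ V₂ : Type*} (G₁ : SimpleGraph V₁) (G₂ : SimpleGraph V₂) (u : V₁) (v : V₂) :
    SimpleGraph (V₁ ⊕ V₂) where
  Adj x y :=
    match x, y with
    | Sum.inl a, Sum.inl b => G₁.Adj a b
    | Sum.inl a, Sum.inr b => a = u ∧ b = v
    | Sum.inr a, Sum.inl b => a = v ∧ b = u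
    | Sum.inr a, Sum.inr b => G₂.Adj a b
  symm := by
    constructor
    rintro (a | a) (b | b) h
    · exact G₁.adj_symm h
    · exact ⟨h.2, h.1⟩
    · exact ⟨h.2, h.1⟩
    · exact G₂.adj_symm h
  loopless := by
    constructor
    rintro (a | a) h
    · exact G₁.ne_of_adj h rfl
    · exact G₂.ne_of_adj h rfl
lemma det_updateRow_single {n : Type*} [Fintype n] [DecidableEq n] {R : Type*} [CommRing R]
    (M : Matrix n n R) (j : n) :
    (M.updateRow j (Pi.single j 1)).det =
      (M.submatrix (fun i : {x : n // x ≠ j} => (i : n)) (fun i : {x : n // x ≠ j} => (i : n))).det := by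
  classical
  let e : {x : n // x ≠ j} ⊕ Unit ≃ n :=
    { toFun := Sum.elim Subtype.val (fun _ => j)
      invFun := fun i => if h : i = j then Sum.inr () else Sum.inl ⟨i, h⟩
      left_inv := by
        rintro (⟨i, hi⟩ | ⟨⟩)
        · simp [hi]
        · simp
      right_inv := by intro i; by_cases h : i = j <;> simp [h] }
  rw [← Matrix.det_submatrix_equiv_self e]
  have : (M.updateRow j (Pi.single j 1)).submatrix e e =
      Matrix.fromBlocks
        (M.submatrix (fun i : {x : n // x ≠ j} => (i : n)) (fun i : {x : n // x ≠ j} => (i : n)))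
        (Matrix.of fun i : {x : n // x ≠ j} => fun _ : Unit => M i j)
        0 1 := by
    ext i k
    obtain (⟨i, hi⟩ | ⟨⟩) := i
    · obtain (⟨k, hk⟩ | ⟨⟩) := k
      · simp [e, Matrix.updateRow_apply, hi]
      · simp [e, Matrix.updateRow_apply, hi]
    · obtain (⟨k, hk⟩ | ⟨⟩) := k
      · simp [e, Matrix.updateRow_apply, Pi.single_apply, Ne.symm hk]
      · simp [e, Matrix.updateRow_apply, Pi.single_apply, Matrix.one_apply]
  rw [this, Matrix.det_fromBlocks_zero₂₁]
  simp

lemma degree_sum_indicator {V : Type*} [Fintype V] (G : SimpleGraph V) (w : V)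
    [Fintype (G.neighborSet w)] [DecidableRel G.Adj] :
    G.degree w = ∑ x : V, if G.Adj w x then 1 else 0 := by
  classical
  rw [← SimpleGraph.card_neighborFinset_eq_degree,
    show G.neighborFinset w = Finset.univ.filter (G.Adj w) from Finset.ext (by simp),
    Finset.card_filter]

lemma degree_join_inl {V₁ V₂ : Type*} [Fintype V₁] [Fintype V₂] [DecidableEq V₁] [DecidableEq V₂]
    (G₁ : SimpleGraph V₁) (G₂ : SimpleGraph V₂) (u : V₁) (v : V₂) (a : V₁)
    [Fintype ((joinByEdge G₁ G₂ u v).neighborSet (Sum.inl a))] [Fintype (G₁.neighborSet a)] :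
    (joinByEdge G₁ G₂ u v).degree (Sum.inl a) = G₁.degree a + (if a = u then 1 else 0) := by
  classical
  rw [degree_sum_indicator, degree_sum_indicator, Fintype.sum_sum_type]
  have h1 : ∀ b : V₁, ((joinByEdge G₁ G₂ u v).Adj (Sum.inl a) (Sum.inl b)) = G₁.Adj a b :=
    fun b => rfl
  have h2 : ∀ b : V₂, ((joinByEdge G₁ G₂ u v).Adj (Sum.inl a) (Sum.inr b)) = (a = u ∧ b = v) :=
    fun b => rfl
  simp only [h1, h2]
  congr 1
  by_cases h : a = u <;> simp [h]

lemma degree_join_inr {V₁ V₂ : Type*} [Fintype V₁] [Fintype V₂] [DecidableEq V₁] [DecidableEq V₂]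
    (G₁ : SimpleGraph V₁) (G₂ : SimpleGraph V₂) (u : V₁) (v : V₂) (a : V₂)
    [Fintype ((joinByEdge G₁ G₂ u v).neighborSet (Sum.inr a))] [Fintype (G₂.neighborSet a)] :
    (joinByEdge G₁ G₂ u v).degree (Sum.inr a) = G₂.degree a + (if a = v then 1 else 0) := by
  classical
  rw [degree_sum_indicator, degree_sum_indicator, Fintype.sum_sum_type]
  have h1 : ∀ b : V₂, ((joinByEdge G₁ G₂ u v).Adj (Sum.inr a) (Sum.inr b)) = G₂.Adj a b :=
    fun b => rfl
  have h2 : ∀ b : V₁, ((joinByEdge G₁ G₂ u v).Adj (Sum.inr a) (Sum.inl b)) = (a = v ∧ b = u) :=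
    fun b => rfl
  simp only [h1, h2]
  rw [add_comm (∑ _x : V₁, _)]
  congr 1
  by_cases h : a = v <;> simp [h]

section Entries
variable {V₁ V₂ : Type*} [Fintype V₁] [Fintype V₂] [DecidableEq V₁] [DecidableEq V₂]
  (G₁ : SimpleGraph V₁) (G₂ : SimpleGraph V₂) (u : V₁) (v : V₂)

lemma signlessLaplacian_apply {V : Type*} [Fintype V] [DecidableEq V] (G : SimpleGraph V)
    (i j : V) [Fintype (G.neighborSet i)] [Decidable (G.Adj i j)] :
    signlessLaplacian G i j =
      (if i = j then (G.degree i : ℝ) else 0) + (if G.Adj i j then 1 else 0) := by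
  classical
  unfold signlessLaplacian
  rw [Matrix.add_apply, SimpleGraph.degMatrix, Matrix.diagonal_apply, SimpleGraph.adjMatrix_apply]
  congr 1
  · by_cases h : i = j
    · subst h
      simp only [if_pos rfl]
      norm_cast
      congr!
    · simp [h]
  · by_cases h : G.Adj i j <;> simp [h]

lemma sL_join_ll (a b : V₁) :
    signlessLaplacian (joinByEdge G₁ G₂ u v) (Sum.inl a) (Sum.inl b) =
      signlessLaplacian G₁ a b + (if a = u ∧ a = b then 1 else 0) := by
  classical
  rw [signlessLaplacian_apply, signlessLaplacian_apply]
  have hadj : (joinByEdge G₁ G₂ u v).Adj (Sum.inl a) (Sum.inl b) ↔ G₁.Adj a b := Iff.rfl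
  by_cases hab : a = b
  · subst hab
    rw [degree_join_inl G₁ G₂ u v a]
    push_cast
    by_cases h : a = u <;> simp [h, hadj]
  · simp [hab, hadj, Sum.inl.injEq]

lemma sL_join_lr (a : V₁) (b : V₂) :
    signlessLaplacian (joinByEdge G₁ G₂ u v) (Sum.inl a) (Sum.inr b) =
      (if a = u ∧ b = v then 1 else 0) := by
  classical
  rw [signlessLaplacian_apply]
  have hadj : (joinByEdge G₁ G₂ u v).Adj (Sum.inl a) (Sum.inr b) ↔ (a = u ∧ b = v) := Iff.rfl
  simp [hadj]

lemma sL_join_rl (a : V₂) (b : V₁) :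
    signlessLaplacian (joinByEdge G₁ G₂ u v) (Sum.inr a) (Sum.inl b) =
      (if a = v ∧ b = u then 1 else 0) := by
  classical
  rw [signlessLaplacian_apply]
  have hadj : (joinByEdge G₁ G₂ u v).Adj (Sum.inr a) (Sum.inl b) ↔ (a = v ∧ b = u) := Iff.rfl
  simp [hadj]

lemma sL_join_rr (a b : V₂) :
    signlessLaplacian (joinByEdge G₁ G₂ u v) (Sum.inr a) (Sum.inr b) =
      signlessLaplacian G₂ a b + (if a = v ∧ a = b then 1 else 0) := by
  classical
  rw [signlessLaplacian_apply, signlessLaplacian_apply]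
  have hadj : (joinByEdge G₁ G₂ u v).Adj (Sum.inr a) (Sum.inr b) ↔ G₂.Adj a b := Iff.rfl
  by_cases hab : a = b
  · subst hab
    rw [degree_join_inr G₁ G₂ u v a]
    push_cast
    by_cases h : a = v <;> simp [h, hadj]
  · simp [hab, hadj, Sum.inr.injEq]

end Entries

set_option maxHeartbeats 1000000 in
/-- the signless Laplacian characteristic polynomial of `G₁|u : G₂|v`
satisfies `Q_G = Q_{G₁}·Q_{G₂} − Q_{G₁}·Q_{G₂|v} − Q_{G₂}·Q_{G₁|u}`. -/
theorem Qpoly_joinByEdge {V₁ V₂ : Type*}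
    [Fintype V₁] [Fintype V₂] [DecidableEq V₁] [DecidableEq V₂]
    (G₁ : SimpleGraph V₁) (G₂ : SimpleGraph V₂) (u : V₁) (v : V₂) :
    Qpoly (joinByEdge G₁ G₂ u v) =
      Qpoly G₁ * Qpoly G₂ - Qpoly G₁ * QpolyDel G₂ v - Qpoly G₂ * QpolyDel G₁ u := by
  classical
  set M₁ : Matrix V₁ V₁ ℝ[X] := Matrix.charmatrix (signlessLaplacian G₁) with hM₁
  set M₂ : Matrix V₂ V₂ ℝ[X] := Matrix.charmatrix (signlessLaplacian G₂) with hM₂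
  set B0 : Matrix (V₁ ⊕ V₂) (V₁ ⊕ V₂) ℝ[X] := Matrix.fromBlocks M₁ 0 0 M₂ with hB0
  set s : (V₁ ⊕ V₂) → ℝ[X] :=
    (-1 : ℝ[X]) • (Pi.single (Sum.inl u) (1 : ℝ[X]) : (V₁ ⊕ V₂) → ℝ[X]) +
      (-1 : ℝ[X]) • (Pi.single (Sum.inr v) (1 : ℝ[X]) : (V₁ ⊕ V₂) → ℝ[X]) with hs
  have hne : (Sum.inr v : V₁ ⊕ V₂) ≠ Sum.inl u := by simp
  have hne' : (Sum.inl u : V₁ ⊕ V₂) ≠ Sum.inr v := by simp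
  -- entry values of s
  have hsl : ∀ b : V₁, s (Sum.inl b) = -(if b = u then 1 else 0) := by
    intro b; simp [hs, Pi.single_apply]
  have hsr : ∀ b : V₂, s (Sum.inr b) = -(if b = v then 1 else 0) := by
    intro b; simp [hs, Pi.single_apply]
  -- the block structure of the charmatrix of the join
  have hmat : Matrix.charmatrix (signlessLaplacian (joinByEdge G₁ G₂ u v)) =
      (B0.updateRow (Sum.inl u) (B0 (Sum.inl u) + s)).updateRow (Sum.inr v)
        (B0 (Sum.inr v) + s) := by
    ext i j : 2
    obtain (a | a) := i
    · rw [Matrix.updateRow_ne (by simp : (Sum.inl a : V₁ ⊕ V₂) ≠ Sum.inr v)]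
      obtain (b | b) := j
      · -- (inl, inl)
        rw [Matrix.charmatrix_apply, sL_join_ll]
        by_cases ha : a = u
        · subst ha
          rw [Matrix.updateRow_self, Pi.add_apply, hsl]
          simp only [hB0, Matrix.fromBlocks_apply₁₁, hM₁, Matrix.charmatrix_apply]
          by_cases hb : a = b
          · subst hb
            simp only [Matrix.diagonal_apply_eq, and_self, if_true, map_add, Polynomial.C_1]
            ring_nf
          · simp only [Matrix.diagonal_apply, Sum.inl.injEq, hb, if_neg, if_false,
              Ne.symm hb, and_false, map_add, map_zero]
            simp [hb, Ne.symm hb]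
        · rw [Matrix.updateRow_ne (by simp [ha] : (Sum.inl a : V₁ ⊕ V₂) ≠ Sum.inl u)]
          simp only [hB0, Matrix.fromBlocks_apply₁₁, hM₁, Matrix.charmatrix_apply]
          simp [ha, Matrix.diagonal_apply, Sum.inl.injEq]
      · -- (inl, inr)
        rw [Matrix.charmatrix_apply, sL_join_lr]
        by_cases ha : a = u
        · subst ha
          rw [Matrix.updateRow_self, Pi.add_apply, hsr]
          simp only [hB0, Matrix.fromBlocks_apply₁₂]
          simp [Matrix.diagonal_apply, apply_ite]
        · rw [Matrix.updateRow_ne (by simp [ha] : (Sum.inl a : V₁ ⊕ V₂) ≠ Sum.inl u)]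
          simp only [hB0, Matrix.fromBlocks_apply₁₂]
          simp [ha, Matrix.diagonal_apply]
    · obtain (b | b) := j
      · -- (inr, inl)
        rw [Matrix.charmatrix_apply, sL_join_rl]
        by_cases ha : a = v
        · subst ha
          rw [Matrix.updateRow_self, Pi.add_apply, hsl]
          simp only [hB0, Matrix.fromBlocks_apply₂₁]
          simp [Matrix.diagonal_apply, apply_ite]
        · rw [Matrix.updateRow_ne (by simp [ha] : (Sum.inr a : V₁ ⊕ V₂) ≠ Sum.inr v),
            Matrix.updateRow_ne (by simp : (Sum.inr a : V₁ ⊕ V₂) ≠ Sum.inl u)]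
          simp only [hB0, Matrix.fromBlocks_apply₂₁]
          simp [ha, Matrix.diagonal_apply]
      · -- (inr, inr)
        rw [Matrix.charmatrix_apply, sL_join_rr]
        by_cases ha : a = v
        · subst ha
          rw [Matrix.updateRow_self, Pi.add_apply, hsr]
          simp only [hB0, Matrix.fromBlocks_apply₂₂, hM₂, Matrix.charmatrix_apply]
          by_cases hb : a = b
          · subst hb
            simp only [Matrix.diagonal_apply_eq, and_self, if_true, map_add, Polynomial.C_1]
            ring_nf
          · simp only [Matrix.diagonal_apply, Sum.inr.injEq, hb, if_neg, if_false,
              Ne.symm hb, and_false, map_add, map_zero]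
            simp [hb, Ne.symm hb]
        · rw [Matrix.updateRow_ne (by simp [ha] : (Sum.inr a : V₁ ⊕ V₂) ≠ Sum.inr v),
            Matrix.updateRow_ne (by simp : (Sum.inr a : V₁ ⊕ V₂) ≠ Sum.inl u)]
          simp only [hB0, Matrix.fromBlocks_apply₂₂, hM₂, Matrix.charmatrix_apply]
          simp [ha, Matrix.diagonal_apply, Sum.inr.injEq]
  -- determinant identities for the four pieces
  have hQ1 : Qpoly G₁ = M₁.det := rfl
  have hQ2 : Qpoly G₂ = M₂.det := rfl
  have hD1 : QpolyDel G₁ u = (M₁.updateRow u (Pi.single u 1)).det := by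
    unfold QpolyDel
    convert (det_updateRow_single M₁ u).symm
  have hD2 : QpolyDel G₂ v = (M₂.updateRow v (Pi.single v 1)).det := by
    unfold QpolyDel
    convert (det_updateRow_single M₂ v).symm
  have hB0det : B0.det = M₁.det * M₂.det := Matrix.det_fromBlocks_zero₂₁ M₁ 0 M₂
  -- det of B0 with row (inl u) replaced by s
  have e1 : B0.updateRow (Sum.inl u) (Pi.single (Sum.inl u) 1) =
      Matrix.fromBlocks (M₁.updateRow u (Pi.single u 1)) 0 0 M₂ := by
    ext i j : 2
    obtain (a | a) := i <;> obtain (b | b) := j <;>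
      simp [Matrix.updateRow_apply, Pi.single_apply, hB0, apply_ite]
  have e2 : B0.updateRow (Sum.inl u) (Pi.single (Sum.inr v) 1) =
      Matrix.fromBlocks (M₁.updateRow u 0)
        (Matrix.of fun a b => if a = u then (Pi.single v (1:ℝ[X]) : V₂ → ℝ[X]) b else 0) 0 M₂ := by
    ext i j : 2
    obtain (a | a) := i <;> obtain (b | b) := j <;>
      simp [Matrix.updateRow_apply, Pi.single_apply, hB0, apply_ite]
  have hlu : (B0.updateRow (Sum.inl u) s).det = -(QpolyDel G₁ u * M₂.det) := by
    rw [hs, Matrix.det_updateRow_add, Matrix.det_updateRow_smul, Matrix.det_updateRow_smul,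
      e1, e2, Matrix.det_fromBlocks_zero₂₁, Matrix.det_fromBlocks_zero₂₁,
      Matrix.det_eq_zero_of_row_eq_zero (A := M₁.updateRow u 0) u (fun j => by simp), hD1]
    ring_nf
  have e3 : B0.updateRow (Sum.inr v) (Pi.single (Sum.inr v) 1) =
      Matrix.fromBlocks M₁ 0 0 (M₂.updateRow v (Pi.single v 1)) := by
    ext i j : 2
    obtain (a | a) := i <;> obtain (b | b) := j <;>
      simp [Matrix.updateRow_apply, Pi.single_apply, hB0, apply_ite]
  have e4 : B0.updateRow (Sum.inr v) (Pi.single (Sum.inl u) 1) =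
      Matrix.fromBlocks M₁ 0
        (Matrix.of fun a b => if a = v then (Pi.single u (1:ℝ[X]) : V₁ → ℝ[X]) b else 0) (M₂.updateRow v 0) := by
    ext i j : 2
    obtain (a | a) := i <;> obtain (b | b) := j <;>
      simp [Matrix.updateRow_apply, Pi.single_apply, hB0, apply_ite]
  have hrv : (B0.updateRow (Sum.inr v) s).det = -(M₁.det * QpolyDel G₂ v) := by
    rw [hs, Matrix.det_updateRow_add, Matrix.det_updateRow_smul, Matrix.det_updateRow_smul,
      e3, e4, Matrix.det_fromBlocks_zero₂₁, Matrix.det_fromBlocks_zero₁₂,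
      Matrix.det_eq_zero_of_row_eq_zero (A := M₂.updateRow v 0) v (fun j => by simp), hD2]
    ring_nf
  -- assemble
  have hA : (B0.updateRow (Sum.inl u) (B0 (Sum.inl u) + s)).det =
      B0.det + (B0.updateRow (Sum.inl u) s).det := by
    rw [Matrix.det_updateRow_add, Matrix.updateRow_eq_self]
  have hArv : ((B0.updateRow (Sum.inl u) (B0 (Sum.inl u) + s)).updateRow (Sum.inr v) s).det
      = (B0.updateRow (Sum.inr v) s).det := by
    have hcomm : (B0.updateRow (Sum.inl u) (B0 (Sum.inl u) + s)).updateRow (Sum.inr v) s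
        = (B0.updateRow (Sum.inr v) s).updateRow (Sum.inl u) (B0 (Sum.inl u) + s) := by
      ext i j
      rcases eq_or_ne i (Sum.inr v) with h | h
      · subst h
        rw [Matrix.updateRow_self, Matrix.updateRow_ne hne, Matrix.updateRow_self]
      · rw [Matrix.updateRow_ne h, Matrix.updateRow_apply, Matrix.updateRow_apply]
        rcases eq_or_ne i (Sum.inl u) with h' | h'
        · simp [h']
        · simp [h', Matrix.updateRow_ne h]
    rw [hcomm, Matrix.det_updateRow_add]
    have hB0lu : (B0.updateRow (Sum.inr v) s) (Sum.inl u) = B0 (Sum.inl u) :=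
      Matrix.updateRow_ne hne'
    rw [← hB0lu, Matrix.updateRow_eq_self]
    have hzero : ((B0.updateRow (Sum.inr v) s).updateRow (Sum.inl u) s).det = 0 := by
      apply Matrix.det_zero_of_row_eq hne'
      rw [Matrix.updateRow_self, Matrix.updateRow_ne hne, Matrix.updateRow_self]
    rw [hzero, add_zero]
  have main : (Matrix.charmatrix (signlessLaplacian (joinByEdge G₁ G₂ u v))).det =
      B0.det + (B0.updateRow (Sum.inr v) s).det + (B0.updateRow (Sum.inl u) s).det := by
    rw [hmat]
    have hrow : (B0.updateRow (Sum.inl u) (B0 (Sum.inl u) + s)) (Sum.inr v) = B0 (Sum.inr v) :=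
      Matrix.updateRow_ne hne
    rw [show (B0 (Sum.inr v) + s) = ((B0.updateRow (Sum.inl u) (B0 (Sum.inl u) + s)) (Sum.inr v) + s) by rw [hrow]]
    rw [Matrix.det_updateRow_add, Matrix.updateRow_eq_self, hA, hArv]
    ring_nf
  have : Qpoly (joinByEdge G₁ G₂ u v)
      = (Matrix.charmatrix (signlessLaplacian (joinByEdge G₁ G₂ u v))).det := rfl
  rw [this, main, hB0det, hlu, hrv, hQ1, hQ2]
  ring_nf
end

section
/- Let H be a finite simple graph with |V(H)| ≥ 2, let v be a vertex of H, let k ≥ 0, and let G be the graph on n = |V(H)| + k vertices obtained from H by attaching k new pendant vertices, each adjacent only to v. Then, as polynomials in x, Q_G(x) = (x−1)^k · Q_H(x) − k·x·(x−1)^{k−1} · Q_{H|v}(x). -/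
open Polynomial

/-- Attach `k` new pendant vertices, each adjacent only to the vertex `v` of `H`. -/
def attachPendants {V : Type*} (H : SimpleGraph V) (v : V) (k : ℕ) :
    SimpleGraph (V ⊕ Fin k) where
  Adj x y :=
    match x, y with
    | Sum.inl a, Sum.inl b => H.Adj a b
    | Sum.inl a, Sum.inr _ => a = v
    | Sum.inr _, Sum.inl b => b = v
    | Sum.inr _, Sum.inr _ => False
  symm := by
    constructor
    rintro (a | a) (b | b) h
    · exact H.adj_symm h
    · exact h
    · exact h
    · exact h
  loopless := by
    constructor
    rintro (a | a) h
    · exact H.irrefl h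
    · exact h

lemma det_updateCol_single_eq {R : Type*} [CommRing R] {V : Type*} [Fintype V]
    [DecidableEq V] (N : Matrix V V R) (v : V) [Fintype {x : V // x ≠ v}] :
    (N.updateCol v (Pi.single v 1)).det =
      (N.submatrix (fun i : {x : V // x ≠ v} => (i : V))
        (fun j : {x : V // x ≠ v} => (j : V))).det := by
  classical
  rw [← Matrix.det_submatrix_equiv_self (Equiv.sumCompl (fun x : V => x ≠ v))]
  have hmat : (N.updateCol v (Pi.single v 1)).submatrix
      (Equiv.sumCompl (fun x : V => x ≠ v)) (Equiv.sumCompl (fun x : V => x ≠ v)) =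
      Matrix.fromBlocks
        (N.submatrix (fun i : {x : V // x ≠ v} => (i : V)) (fun j : {x : V // x ≠ v} => (j : V)))
        0
        (Matrix.of fun (_ : {x : V // ¬ x ≠ v}) (j : {x : V // x ≠ v}) => N v (j : V))
        1 := by
    ext i j
    rcases i with i | i <;> rcases j with j | j
    · simp [Matrix.updateCol_apply, j.2]
    · have hj : (j : V) = v := not_not.mp j.2
      simp [Matrix.updateCol_apply, Pi.single_apply, i.2, hj]
    · have hi : (i : V) = v := not_not.mp i.2
      simp [Matrix.updateCol_apply, j.2, hi]
    · have hi : (i : V) = v := not_not.mp i.2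
      have hj : (j : V) = v := not_not.mp j.2
      have hij : i = j := Subtype.ext (hi.trans hj.symm)
      simp [Matrix.updateCol_apply, hi, hj, Pi.single_apply, hij, Matrix.one_apply]
  rw [hmat, Matrix.det_fromBlocks_zero₁₂, Matrix.det_one, mul_one]

lemma det_sub_smul_single {R : Type*} [CommRing R] {V : Type*} [Fintype V] [DecidableEq V]
    (N : Matrix V V R) (w : V) (c : R) [Fintype {x : V // x ≠ w}] :
    (N - c • Matrix.single w w (1 : R)).det =
      N.det - c * (N.submatrix (fun i : {x : V // x ≠ w} => (i : V))
        (fun j : {x : V // x ≠ w} => (j : V))).det := by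
  have h : N - c • Matrix.single w w (1 : R) =
      N.updateCol w ((fun i => N i w) + (-c • (Pi.single w 1 : V → R))) := by
    ext i j
    simp only [Matrix.sub_apply, Matrix.smul_apply, Matrix.updateCol_apply,
      Matrix.single, Matrix.of_apply, Pi.add_apply, Pi.smul_apply, Pi.single_apply,
      smul_eq_mul]
    by_cases hj : j = w <;> by_cases hi : i = w <;>
      simp [hi, hj, sub_eq_add_neg] <;>
      (intros; simp_all)
  rw [h, Matrix.det_updateCol_add, Matrix.updateCol_eq_self,
    Matrix.det_updateCol_smul, det_updateCol_single_eq]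
  ring

lemma attach_degree_inr {V : Type*} [Fintype V] (H : SimpleGraph V) (v : V) {k : ℕ} (j : Fin k)
    [Fintype ((attachPendants H v k).neighborSet (Sum.inr j))] :
    (attachPendants H v k).degree (Sum.inr j) = 1 := by
  classical
  have h : (attachPendants H v k).neighborFinset (Sum.inr j) = {Sum.inl v} := by
    ext y
    cases y with
    | inl b => rw [SimpleGraph.mem_neighborFinset]; simp [attachPendants, eq_comm]
    | inr j' => rw [SimpleGraph.mem_neighborFinset]; simp [attachPendants]
  rw [SimpleGraph.degree, h, Finset.card_singleton]

lemma attach_degree_inl {V : Type*} [Fintype V] [DecidableEq V] (H : SimpleGraph V) (v : V)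
    {k : ℕ} (a : V) [Fintype ((attachPendants H v k).neighborSet (Sum.inl a))]
    [Fintype (H.neighborSet a)] :
    (attachPendants H v k).degree (Sum.inl a) = H.degree a + if a = v then k else 0 := by
  classical
  have h1 : (attachPendants H v k).neighborFinset (Sum.inl a)
      = Finset.univ.filter (fun y => (attachPendants H v k).Adj (Sum.inl a) y) := by
    ext y; simp [SimpleGraph.mem_neighborFinset]
  have h2 : H.neighborFinset a = Finset.univ.filter (fun b => H.Adj a b) := by
    ext b; simp [SimpleGraph.mem_neighborFinset]
  rw [SimpleGraph.degree, h1, Finset.card_filter, Fintype.sum_sum_type,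
    SimpleGraph.degree, h2, Finset.card_filter]
  congr 1
  by_cases ha : a = v
  · simp [attachPendants, ha]
  · simp [attachPendants, ha]

lemma charmatrix_attach {V : Type*} [Fintype V] [DecidableEq V] (H : SimpleGraph V) (v : V)
    (k : ℕ) :
    Matrix.charmatrix (signlessLaplacian (attachPendants H v k)) =
      Matrix.fromBlocks
        (Matrix.charmatrix (signlessLaplacian H) - (k : ℝ[X]) • Matrix.single v v 1)
        (Matrix.of fun a (_ : Fin k) => if a = v then (-1 : ℝ[X]) else 0)
        (Matrix.of fun (_ : Fin k) b => if b = v then (-1 : ℝ[X]) else 0)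
        (Matrix.diagonal fun _ : Fin k => (X : ℝ[X]) - 1) := by
  classical
  refine Matrix.ext fun i j => ?_
  rcases i with a | p <;> rcases j with b | q
  · by_cases hab : a = b
    · subst hab
      rw [Matrix.charmatrix_apply_eq, Matrix.fromBlocks_apply₁₁, Matrix.sub_apply,
        Matrix.charmatrix_apply_eq]
      have hQG : signlessLaplacian (attachPendants H v k) (Sum.inl a) (Sum.inl a)
          = ((H.degree a + if a = v then k else 0 : ℕ) : ℝ) := by
        simp [signlessLaplacian, SimpleGraph.degMatrix, Matrix.diagonal_apply,
          SimpleGraph.adjMatrix_apply, attach_degree_inl, SimpleGraph.irrefl]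
      have hQH : signlessLaplacian H a a = ((H.degree a : ℕ) : ℝ) := by
        simp [signlessLaplacian, SimpleGraph.degMatrix, Matrix.diagonal_apply,
          SimpleGraph.adjMatrix_apply]
      rw [hQG, hQH]
      by_cases ha : a = v
      · simp only [ha, Matrix.smul_apply, Matrix.single_apply_same, if_pos rfl,
          smul_eq_mul, mul_one]
        push_cast [map_add, map_natCast]
        ring
      · have h0 : Matrix.single v v (1 : ℝ[X]) a a = 0 := by
          rw [Matrix.single_apply_of_ne]
          intro h; exact ha h.1.symm
        rw [if_neg ha, Nat.add_zero, Matrix.smul_apply, h0]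
        simp
    · have h1 : (Sum.inl a : V ⊕ Fin k) ≠ Sum.inl b := by simp [hab]
      rw [Matrix.charmatrix_apply_ne _ _ _ h1, Matrix.fromBlocks_apply₁₁, Matrix.sub_apply,
        Matrix.charmatrix_apply_ne _ _ _ hab]
      have hQG : signlessLaplacian (attachPendants H v k) (Sum.inl a) (Sum.inl b)
          = signlessLaplacian H a b := by
        simp only [signlessLaplacian, Matrix.add_apply, SimpleGraph.adjMatrix_apply]
        simp [signlessLaplacian, SimpleGraph.degMatrix, Matrix.diagonal_apply,
          SimpleGraph.adjMatrix_apply, attachPendants, hab]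
        congr!
      rw [hQG, Matrix.smul_apply, Matrix.single_apply_of_ne]
      · simp
      · intro h; exact hab (h.1.symm.trans h.2)
  · rw [Matrix.charmatrix_apply_ne _ _ _ (by simp), Matrix.fromBlocks_apply₁₂]
    have hQG : signlessLaplacian (attachPendants H v k) (Sum.inl a) (Sum.inr q)
        = if a = v then (1 : ℝ) else 0 := by
      simp only [signlessLaplacian, Matrix.add_apply, SimpleGraph.adjMatrix_apply]
      simp [signlessLaplacian, SimpleGraph.degMatrix, Matrix.diagonal_apply,
        SimpleGraph.adjMatrix_apply, attachPendants]
      split_ifs with h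
      · exact if_pos h
      · exact if_neg h
    rw [hQG]
    by_cases ha : a = v <;> simp [ha]
  · rw [Matrix.charmatrix_apply_ne _ _ _ (by simp), Matrix.fromBlocks_apply₂₁]
    have hQG : signlessLaplacian (attachPendants H v k) (Sum.inr p) (Sum.inl b)
        = if b = v then (1 : ℝ) else 0 := by
      simp only [signlessLaplacian, Matrix.add_apply, SimpleGraph.adjMatrix_apply]
      simp [signlessLaplacian, SimpleGraph.degMatrix, Matrix.diagonal_apply,
        SimpleGraph.adjMatrix_apply, attachPendants]
      split_ifs with h
      · exact if_pos h
      · exact if_neg h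
    rw [hQG]
    by_cases hb : b = v <;> simp [hb]
  · by_cases hpq : p = q
    · subst hpq
      rw [Matrix.charmatrix_apply_eq, Matrix.fromBlocks_apply₂₂, Matrix.diagonal_apply_eq]
      have hQG : signlessLaplacian (attachPendants H v k) (Sum.inr p) (Sum.inr p)
          = ((1 : ℕ) : ℝ) := by
        simp [signlessLaplacian, SimpleGraph.degMatrix, Matrix.diagonal_apply,
          SimpleGraph.adjMatrix_apply, attach_degree_inr, SimpleGraph.irrefl]
      rw [hQG]
      push_cast [map_one]
      ring
    · have h1 : (Sum.inr p : V ⊕ Fin k) ≠ Sum.inr q := by simp [hpq]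
      rw [Matrix.charmatrix_apply_ne _ _ _ h1, Matrix.fromBlocks_apply₂₂,
        Matrix.diagonal_apply_ne _ hpq]
      have hQG : signlessLaplacian (attachPendants H v k) (Sum.inr p) (Sum.inr q)
          = 0 := by
        simp only [signlessLaplacian, Matrix.add_apply, SimpleGraph.adjMatrix_apply]
        simp [signlessLaplacian, SimpleGraph.degMatrix, Matrix.diagonal_apply,
          SimpleGraph.adjMatrix_apply, attachPendants, hpq]
      rw [hQG]
      simp
set_option maxHeartbeats 1600000 in
set_option synthInstance.maxHeartbeats 400000 in
/-- attaching `k` pendant vertices at a vertex `v` of a graph `H` with at least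
two vertices gives `Q_G(x) = (x−1)^k Q_H(x) − k·x·(x−1)^{k−1} Q_{H|v}(x)`. -/
theorem Qpoly_attachPendants {V : Type*} [Fintype V] [DecidableEq V]
    (H : SimpleGraph V) (hV : 2 ≤ Fintype.card V) (v : V) (k : ℕ) :
    Qpoly (attachPendants H v k) =
      (X - 1) ^ k * Qpoly H - (k : ℝ[X]) * X * (X - 1) ^ (k - 1) * QpolyDel H v := by
  classical
  have hinj : Function.Injective (algebraMap ℝ[X] (RatFunc ℝ)) :=
    IsFractionRing.injective _ _
  apply hinj
  set f : ℝ[X] →+* RatFunc ℝ := (algebraMap ℝ[X] (RatFunc ℝ) : ℝ[X] →+* RatFunc ℝ) with hf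
  set d : RatFunc ℝ := f (X - 1) with hdd
  have hX1 : (X - 1 : ℝ[X]) ≠ 0 := fun h => by
    simpa using congrArg (Polynomial.eval 0) h
  have hd0 : d ≠ 0 := by
    rw [hdd]
    intro h
    exact hX1 (hinj (h.trans (map_zero f).symm))
  have hfx : f X = d + 1 := by
    rw [hdd, map_sub, map_one]; ring
  -- the invertible bottom-right block
  letI : Invertible (Matrix.diagonal fun _ : Fin k => d) :=
    ⟨Matrix.diagonal fun _ => d⁻¹,
      by rw [Matrix.diagonal_mul_diagonal]; simp [inv_mul_cancel₀ hd0],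
      by rw [Matrix.diagonal_mul_diagonal]; simp [mul_inv_cancel₀ hd0]⟩
  have hinvD : ⅟(Matrix.diagonal fun _ : Fin k => d) = Matrix.diagonal fun _ => d⁻¹ := rfl
  set c : RatFunc ℝ := (k : RatFunc ℝ) + (k : RatFunc ℝ) * d⁻¹ with hc
  -- Schur complement computation
  have hS : ((Matrix.charmatrix (signlessLaplacian H) - (k : ℝ[X]) • Matrix.single v v 1).map f)
      - ((Matrix.of fun a (_ : Fin k) => if a = v then (-1 : ℝ[X]) else 0).map f)
        * (Matrix.diagonal fun _ : Fin k => d⁻¹)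
        * ((Matrix.of fun (_ : Fin k) b => if b = v then (-1 : ℝ[X]) else 0).map f)
      = (Matrix.charmatrix (signlessLaplacian H)).map f - c • Matrix.single v v (1 : RatFunc ℝ) := by
    refine Matrix.ext fun a b => ?_
    simp only [Matrix.sub_apply, Matrix.map_apply, Matrix.mul_apply, Matrix.diagonal_apply,
      Matrix.of_apply, Matrix.smul_apply, smul_eq_mul, map_sub, map_mul, map_natCast,
      map_neg, map_one, map_zero, apply_ite, hc]
    by_cases ha : a = v <;> by_cases hb : b = v
    · simp [ha, hb, Matrix.single, Matrix.smul_apply, Matrix.of_apply, smul_eq_mul,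
        Finset.mul_sum, Finset.sum_ite_eq, Finset.sum_ite_eq']
      field_simp
      ring
    · simp [ha, hb, Matrix.single, Matrix.smul_apply, Matrix.of_apply, smul_eq_mul,
        Finset.mul_sum, Finset.sum_ite_eq, Finset.sum_ite_eq']
      rw [if_neg (fun h => hb h.symm), if_neg (fun h => hb h.symm)]
    · simp [ha, hb, Matrix.single, Matrix.smul_apply, Matrix.of_apply, smul_eq_mul,
        Finset.mul_sum, Finset.sum_ite_eq, Finset.sum_ite_eq']
      rw [if_neg (fun h => ha h.symm), if_neg (fun h => ha h.symm)]
    · simp [ha, hb, Matrix.single, Matrix.smul_apply, Matrix.of_apply, smul_eq_mul,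
        Finset.mul_sum, Finset.sum_ite_eq, Finset.sum_ite_eq']
      rw [if_neg (fun h : _ ∧ _ => ha h.1.symm), if_neg (fun h : _ ∧ _ => ha h.1.symm)]
  -- the left-hand side
  have hL : f (Qpoly (attachPendants H v k)) =
      d ^ k * (f (Qpoly H) - c *
        (((Matrix.charmatrix (signlessLaplacian H)).submatrix
          (fun i : {x : V // x ≠ v} => (i : V)) (fun j : {x : V // x ≠ v} => (j : V))).map f).det) := by
    rw [Qpoly, Matrix.charpoly, RingHom.map_det, RingHom.mapMatrix_apply, charmatrix_attach,
      Matrix.fromBlocks_map, Matrix.diagonal_map (map_zero f)]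
    have hdmap : (Matrix.diagonal fun _ : Fin k => f ((X : ℝ[X]) - 1))
        = Matrix.diagonal fun _ : Fin k => d := by rw [hdd]
    rw [hdmap, Matrix.det_fromBlocks₂₂, hinvD, hS, det_sub_smul_single]
    have hdet : (Matrix.diagonal fun _ : Fin k => d).det = d ^ k := by
      rw [Matrix.det_diagonal]; simp
    rw [hdet, Qpoly, Matrix.charpoly, RingHom.map_det, RingHom.mapMatrix_apply]
    rfl
  rw [hL]
  -- the right-hand side
  have hminor : (((Matrix.charmatrix (signlessLaplacian H)).submatrix
      (fun i : {x : V // x ≠ v} => (i : V)) (fun j : {x : V // x ≠ v} => (j : V))).map f).det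
      = f (QpolyDel H v) := by
    rw [show ((Matrix.charmatrix (signlessLaplacian H)).submatrix
        (fun i : {x : V // x ≠ v} => (i : V)) (fun j : {x : V // x ≠ v} => (j : V))).map f
      = (f.mapMatrix ((Matrix.charmatrix (signlessLaplacian H)).submatrix
        (fun i : {x : V // x ≠ v} => (i : V)) (fun j : {x : V // x ≠ v} => (j : V)))) from rfl,
      ← RingHom.map_det]
    congr 1
    unfold QpolyDel
    congr!
  rw [hminor]
  have hR : f ((X - 1) ^ k * Qpoly H - (k : ℝ[X]) * X * (X - 1) ^ (k - 1) * QpolyDel H v)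
      = d ^ k * f (Qpoly H) - (k : RatFunc ℝ) * f X * d ^ (k - 1) * f (QpolyDel H v) := by
    simp only [map_sub, map_mul, map_pow, map_natCast, map_one, hfx]
    ring
  rw [hR]
  have key : d ^ k * c = (k : RatFunc ℝ) * f X * d ^ (k - 1) := by
    rcases k with _ | m
    · simp [hc]
    · have h1 : (m + 1 : ℕ) - 1 = m := rfl
      rw [hc, hfx, h1, pow_succ]
      push_cast
      field_simp
  rw [mul_sub, ← mul_assoc, key]
end

section
/- For every integer n ≥ 5, the characteristic polynomial of the signless Laplacian matrix of the graph B₁(n−5,0,0,0,0) equals (x−1)^{n−4} (x−3) (x³ − (n+3)x² + 3n·x − 8). -/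
open Polynomial

/-- Attach `p i` pendant vertices at each vertex `i` of a base graph `H` on `Fin k`. -/
def addPendants {k : ℕ} (H : SimpleGraph (Fin k)) (p : Fin k → ℕ) :
    SimpleGraph ((Fin k) ⊕ (Σ i : Fin k, Fin (p i))) where
  Adj x y :=
    match x, y with
    | Sum.inl a, Sum.inl b => H.Adj a b
    | Sum.inl a, Sum.inr b => a = b.1
    | Sum.inr a, Sum.inl b => a.1 = b
    | Sum.inr _, Sum.inr _ => False
  symm := by
    constructor
    rintro (a | a) (b | b) h
    · exact H.adj_symm h
    · exact h.symm
    · exact h.symm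
    · exact h
  loopless := by
    constructor
    rintro (a | a) h
    · exact H.irrefl h
    · exact h
/-- The base of `B₁`: two triangles `x u v` and `x w z` (`x,u,v,w,z = 0,1,2,3,4`)
sharing exactly the vertex `x`. -/
def B1base : SimpleGraph (Fin 5) :=
  SimpleGraph.fromRel (fun a b =>
    (a = 0 ∧ b = 1) ∨ (a = 0 ∧ b = 2) ∨ (a = 1 ∧ b = 2) ∨
    (a = 0 ∧ b = 3) ∨ (a = 0 ∧ b = 4) ∨ (a = 3 ∧ b = 4))

/-- `B₁(a,b,c,d,e)`: the base `B₁` with `a,b,c,d,e` pendant vertices attached at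
`x,u,v,w,z` respectively. -/
def B1 (a b c d e : ℕ) := addPendants B1base ![a, b, c, d, e]
section Aux
open Matrix

lemma adj_ll {k} (H : SimpleGraph (Fin k)) (p) (a b : Fin k) :
    (addPendants H p).Adj (Sum.inl a) (Sum.inl b) ↔ H.Adj a b := Iff.rfl
lemma adj_lr {k} (H : SimpleGraph (Fin k)) (p) (a : Fin k) (b) :
    (addPendants H p).Adj (Sum.inl a) (Sum.inr b) ↔ a = b.1 := Iff.rfl
lemma adj_rl {k} (H : SimpleGraph (Fin k)) (p) (a) (b : Fin k) :
    (addPendants H p).Adj (Sum.inr a) (Sum.inl b) ↔ a.1 = b := Iff.rfl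
lemma adj_rr {k} (H : SimpleGraph (Fin k)) (p) (a b) :
    (addPendants H p).Adj (Sum.inr a) (Sum.inr b) ↔ False := Iff.rfl

instance B1base.instDec : DecidableRel B1base.Adj := fun a b =>
  decidable_of_iff' _ (SimpleGraph.fromRel_adj _ a b)

lemma degree_eq_sum {V : Type*} [Fintype V] (G : SimpleGraph V) [DecidableRel G.Adj] (v : V) :
    G.degree v = ∑ u : V, if G.Adj v u then 1 else 0 := by
  rw [SimpleGraph.degree, SimpleGraph.neighborFinset_eq_filter, Finset.card_filter]

lemma sigma_sum (m : ℕ) (i : Fin 5) :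
    (∑ b : (Σ j : Fin 5, Fin (![m,0,0,0,0] j)), (if i = b.1 then 1 else 0)) =
      if i = 0 then m else 0 := by
  rw [← Finset.univ_sigma_univ, Finset.sum_sigma, Fin.sum_univ_five]
  by_cases h : i = 0 <;> simp [h, Fin.ext_iff]
  · exact Finset.card_fin m
  · exact ⟨⟨⟨fun _ => rfl, fun _ => rfl⟩, fun _ => rfl⟩, fun _ => rfl⟩

lemma card_sigma_eq (m : ℕ) :
    Fintype.card (Σ j : Fin 5, Fin (![m,0,0,0,0] j)) = m := by
  rw [Fintype.card_sigma, Fin.sum_univ_five]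
  simp only [Fintype.card_fin]
  simp

lemma deg_inl (m : ℕ) [inst : DecidableRel (B1 m 0 0 0 0).Adj] (i : Fin 5) :
    (B1 m 0 0 0 0).degree (Sum.inl i) = (if i = 0 then m + 4 else 2) := by
  rw [degree_eq_sum, Fintype.sum_sum_type]
  have h2 : ∑ b : (Σ j : Fin 5, Fin (![m,0,0,0,0] j)),
      (if (B1 m 0 0 0 0).Adj (Sum.inl i) (Sum.inr b) then 1 else 0) = if i = 0 then m else 0 := by
    simp only [B1, adj_lr]; exact sigma_sum m i
  rw [h2]; clear h2
  have h1 : ∑ a : Fin 5, (if (B1 m 0 0 0 0).Adj (Sum.inl i) (Sum.inl a) then 1 else 0)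
      = if i = 0 then 4 else 2 := by
    simp only [B1, adj_ll]
    revert i; decide
  rw [h1]
  by_cases h : i = 0 <;> simp [h] <;> omega

lemma deg_inr (m : ℕ) [inst : DecidableRel (B1 m 0 0 0 0).Adj]
    (b : Σ j : Fin 5, Fin (![m,0,0,0,0] j)) :
    (B1 m 0 0 0 0).degree (Sum.inr b) = 1 := by
  rw [degree_eq_sum, Fintype.sum_sum_type]
  have h2 : ∑ c : (Σ j : Fin 5, Fin (![m,0,0,0,0] j)),
      (if (B1 m 0 0 0 0).Adj (Sum.inr b) (Sum.inr c) then 1 else 0) = 0 := by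
    simp [B1, adj_rr]
  rw [h2]
  simp only [B1, adj_rl]
  simp [Finset.sum_ite_eq]

set_option maxHeartbeats 2000000 in
lemma detE (u v : ℝ) :
    (Matrix.of fun i j : Fin 5 => (if i = j then (if i = 0 then u else v) else 0)
        - (if B1base.Adj i j then (1:ℝ) else 0)).det
    = (v-1)*(v+1)^2*(u*(v-1) - 4) := by
  simp (config := { decide := true }) only [Matrix.det_succ_row_zero, Fin.sum_univ_succ,
    Matrix.of_apply, Matrix.submatrix_apply, Finset.univ_unique, Finset.sum_singleton,
    Matrix.det_unique, Fin.default_eq_zero]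
  norm_num [Fin.succAbove, Fin.lt_def]
  ring

abbrev Sig (m : ℕ) := (Σ j : Fin 5, Fin (![m,0,0,0,0] j))

noncomputable def A5mat (m : ℕ) (r : ℝ) : Matrix (Fin 5) (Fin 5) ℝ :=
  Matrix.of fun i j : Fin 5 =>
    (if i = j then (if i = 0 then r - ((m:ℝ) + 4) else r - 2) else 0)
      - (if B1base.Adj i j then (1:ℝ) else 0)

noncomputable def Bmat (m : ℕ) : Matrix (Fin 5) (Σ j : Fin 5, Fin (![m,0,0,0,0] j)) ℝ :=
  Matrix.of fun i b => if i = b.1 then (-1:ℝ) else 0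

noncomputable def Cmat (m : ℕ) : Matrix (Σ j : Fin 5, Fin (![m,0,0,0,0] j)) (Fin 5) ℝ :=
  Matrix.of fun b i => if b.1 = i then (-1:ℝ) else 0

set_option maxHeartbeats 1000000 in
lemma eval_Qpoly_B1 (m : ℕ) (r : ℝ) (hr1 : r ≠ 1) :
    Polynomial.eval r (Qpoly (B1 m 0 0 0 0)) =
      (r-1)^(m+1) * (r-3) * (r^3 - ((m:ℝ) + 8)*r^2 + 3*((m:ℝ)+5)*r - 8) := by
  have h1 : r - 1 ≠ 0 := sub_ne_zero.mpr hr1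
  letI inst : DecidableRel (B1 m 0 0 0 0).Adj := Classical.decRel _
  have hQ : Polynomial.eval r (Qpoly (B1 m 0 0 0 0))
      = ((Matrix.charmatrix (signlessLaplacian (B1 m 0 0 0 0))).map (Polynomial.eval r)).det := by
    unfold Qpoly Matrix.charpoly
    rw [← Polynomial.coe_evalRingHom, RingHom.map_det, RingHom.mapMatrix_apply]
  have hsl : ∀ a b, (signlessLaplacian (B1 m 0 0 0 0)) a b
      = (if a = b then (((B1 m 0 0 0 0).degree a : ℝ)) else 0)
        + (if (B1 m 0 0 0 0).Adj a b then 1 else 0) := by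
    intro a b
    simp only [signlessLaplacian, Matrix.add_apply, SimpleGraph.degMatrix,
      Matrix.diagonal_apply, SimpleGraph.adjMatrix_apply]
  have hM : (Matrix.charmatrix (signlessLaplacian (B1 m 0 0 0 0))).map (Polynomial.eval r)
      = Matrix.fromBlocks (A5mat m r) (Bmat m) (Cmat m) ((r-1) • 1) := by
    ext x y
    have hent : ((Matrix.charmatrix (signlessLaplacian (B1 m 0 0 0 0))).map (Polynomial.eval r)) x y
        = (if x = y then r else 0) - (signlessLaplacian (B1 m 0 0 0 0)) x y := by
      rw [Matrix.map_apply, Matrix.charmatrix_apply, Polynomial.eval_sub, Polynomial.eval_C]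
      congr 1
      rw [Matrix.diagonal_apply]
      split_ifs <;> simp
    rw [hent, hsl]
    rcases x with a | b <;> rcases y with a' | b'
    · rw [Matrix.fromBlocks_apply₁₁, deg_inl m a]
      simp only [Sum.inl.injEq, B1, adj_ll, A5mat, Matrix.of_apply]
      by_cases hab : a = a'
      · subst hab
        by_cases ha : a = 0 <;> simp [ha] <;> push_cast <;> ring
      · by_cases ha : a = 0
        · subst ha
          simp only [hab, if_false, if_neg hab]
          push_cast
          ring
        · simp only [hab, if_false, if_neg hab]
          ring
    · rw [Matrix.fromBlocks_apply₁₂]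
      simp only [B1, adj_lr, Bmat, Matrix.of_apply, reduceCtorEq, if_false]
      split_ifs <;> ring
    · rw [Matrix.fromBlocks_apply₂₁]
      simp only [B1, adj_rl, Cmat, Matrix.of_apply, reduceCtorEq, if_false]
      split_ifs <;> ring
    · rw [Matrix.fromBlocks_apply₂₂, deg_inr m b]
      simp only [B1, adj_rr, Matrix.smul_apply, Matrix.one_apply, Sum.inr.injEq, if_false]
      by_cases hbb : b = b' <;> simp [hbb] <;> ring
  haveI hDinv : Invertible ((r-1) • (1 : Matrix (Sig m) (Sig m) ℝ)) := by
    refine ⟨(r-1)⁻¹ • (1 : Matrix (Sig m) (Sig m) ℝ), ?_, ?_⟩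
    · rw [Matrix.smul_mul, Matrix.mul_smul, Matrix.one_mul, smul_smul,
        inv_mul_cancel₀ h1, one_smul]
    · rw [Matrix.smul_mul, Matrix.mul_smul, Matrix.one_mul, smul_smul,
        mul_inv_cancel₀ h1, one_smul]
  have hinv : ⅟((r-1) • (1 : Matrix (Sig m) (Sig m) ℝ))
      = (r-1)⁻¹ • (1 : Matrix (Sig m) (Sig m) ℝ) := by
    apply invOf_eq_right_inv
    rw [Matrix.smul_mul, Matrix.mul_smul, Matrix.one_mul, smul_smul,
      mul_inv_cancel₀ h1, one_smul]
  have hdetD : ((r-1) • (1 : Matrix (Sig m) (Sig m) ℝ)).det = (r-1)^m := by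
    rw [Matrix.det_smul, Matrix.det_one, card_sigma_eq, mul_one]
  have hSchur : A5mat m r - Bmat m * ⅟((r-1) • (1 : Matrix (Sig m) (Sig m) ℝ)) * Cmat m
      = Matrix.of fun i j : Fin 5 =>
          (if i = j then (if i = 0 then r - ((m:ℝ) + 4) - (m:ℝ)*(r-1)⁻¹ else r - 2) else 0)
            - (if B1base.Adj i j then (1:ℝ) else 0) := by
    have hBC : Bmat m * ⅟((r-1) • (1 : Matrix (Sig m) (Sig m) ℝ)) * Cmat m
        = Matrix.of fun i k : Fin 5 => if i = 0 ∧ k = 0 then (m:ℝ)*(r-1)⁻¹ else 0 := by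
      have hfst : ∀ b : Sig m, b.1 = 0 := by
        rintro ⟨j, x⟩
        fin_cases j
        · rfl
        all_goals exact x.elim0
      rw [hinv, Matrix.mul_smul, Matrix.mul_one, Matrix.smul_mul]
      ext i k
      rw [Matrix.smul_apply, Matrix.mul_apply]
      simp only [Bmat, Cmat, Matrix.of_apply]
      rw [Finset.sum_congr rfl (fun b _ => by rw [hfst b]), Finset.sum_const,
        Finset.card_univ, card_sigma_eq]
      by_cases hi : i = 0 <;> by_cases hk : k = 0 <;>
        · simp [hi, hk, eq_comm, nsmul_eq_mul]
          try ring
    rw [hBC]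
    ext i j
    simp only [Matrix.sub_apply, Matrix.of_apply, A5mat]
    by_cases hij : i = j <;> by_cases hi : i = 0 <;> by_cases hj : j = 0 <;>
      simp_all <;> ring
  rw [hQ, hM, Matrix.det_fromBlocks₂₂, hdetD, hSchur, detE]
  have key : ((r - 2)-1)*((r - 2)+1)^2*((r - ((m:ℝ) + 4) - (m:ℝ)*(r-1)⁻¹)*((r - 2)-1) - 4)
      = (r-1) * ((r-3) * (r^3 - ((m:ℝ) + 8)*r^2 + 3*((m:ℝ)+5)*r - 8)) := by
    field_simp
    ring
  rw [key, pow_succ]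
  ring
end Aux

/-- the signless Laplacian characteristic polynomial of `B₁(n−5,0,0,0,0)`. -/
theorem Qpoly_B1 (n : ℕ) (hn : 5 ≤ n) :
    Qpoly (B1 (n - 5) 0 0 0 0) =
      (X - 1) ^ (n - 4) * (X - 3) *
        (X ^ 3 - ((n : ℝ[X]) + 3) * X ^ 2 + 3 * (n : ℝ[X]) * X - 8) := by
  obtain ⟨m, rfl⟩ : ∃ m, n = m + 5 := ⟨n - 5, by omega⟩
  show Qpoly (B1 m 0 0 0 0) = (X - 1) ^ (m + 1) * (X - 3) *
      (X ^ 3 - (((m + 5 : ℕ) : ℝ[X]) + 3) * X ^ 2 + 3 * ((m + 5 : ℕ) : ℝ[X]) * X - 8)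
  apply Polynomial.eq_of_infinite_eval_eq
  have hsub : ({(1:ℝ)}ᶜ : Set ℝ) ⊆ {x | Polynomial.eval x (Qpoly (B1 m 0 0 0 0)) =
      Polynomial.eval x ((X - 1) ^ (m + 1) * (X - 3) *
        (X ^ 3 - (((m + 5 : ℕ) : ℝ[X]) + 3) * X ^ 2 + 3 * ((m + 5 : ℕ) : ℝ[X]) * X - 8))} := by
    intro r hr
    have hr1 : r ≠ 1 := by simpa using hr
    simp only [Set.mem_setOf_eq]
    rw [eval_Qpoly_B1 m r hr1]
    simp only [Polynomial.eval_mul, Polynomial.eval_pow, Polynomial.eval_sub,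
      Polynomial.eval_add, Polynomial.eval_X, Polynomial.eval_one, Polynomial.eval_ofNat,
      Polynomial.eval_natCast]
    push_cast
    ring
  exact Set.Infinite.mono hsub ((Set.finite_singleton (1:ℝ)).infinite_compl)
end
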